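/- Let P be a simple convex polytope with m facets and let Hⱼ ⊂ (ℤ₂)ᵐ be the subgroup generated by e₁,…,eⱼ, with Y⁽ʲ⁾ = η(P × Hⱼ) ⊂ ℝ𝒵_P and F⁽ʲ⁾_i = η(Fᵢ × Hⱼ), where η: P × (ℤ₂)ᵐ → ℝ𝒵_P is the quotient map. Then for each 0 ≤ j ≤ m−1, Y^{(j+1)} is homeomorphic to the double of Y⁽ʲ⁾ along F⁽ʲ⁾_{j+1}, i.e., to the quotient of two copies of Y⁽ʲ⁾ glued by the identity along F⁽ʲ⁾_{j+1}. -/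

import Mathlib

open Set

noncomputable section

instance : TopologicalSpace (ZMod 2) := ⊥

/-- The `i`-th standard basis vector `eᵢ` of `(ℤ₂)ᵐ`. -/
def eVec (m : ℕ) (i : Fin m) : Fin m → ZMod 2 := Pi.single i 1

/-- `G_{f(p)}`: the subgroup of `(ℤ₂)ᵐ` generated by the `eᵢ` with `p ∈ Fᵢ`. -/
def Gface {n m : ℕ} (F : Fin m → Set (EuclideanSpace ℝ (Fin n)))
    (p : EuclideanSpace ℝ (Fin n)) : AddSubgroup (Fin m → ZMod 2) :=
  AddSubgroup.closure {g | ∃ i, p ∈ F i ∧ g = eVec m i}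

/-- The identification `(p,g) ∼ (p',g')` iff `p = p'` and `g - g' ∈ G_{f(p)}`. -/
def rzRel {n m : ℕ} (P : Set (EuclideanSpace ℝ (Fin n)))
    (F : Fin m → Set (EuclideanSpace ℝ (Fin n)))
    (a b : ↥P × (Fin m → ZMod 2)) : Prop :=
  a.1 = b.1 ∧ a.2 - b.2 ∈ Gface F (a.1 : EuclideanSpace ℝ (Fin n))

/-- The real moment-angle space `ℝ𝒵_P`. -/
def RZ {n m : ℕ} (P : Set (EuclideanSpace ℝ (Fin n)))
    (F : Fin m → Set (EuclideanSpace ℝ (Fin n))) : Type :=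
  Quot (rzRel P F)

instance {n m : ℕ} (P : Set (EuclideanSpace ℝ (Fin n)))
    (F : Fin m → Set (EuclideanSpace ℝ (Fin n))) : TopologicalSpace (RZ P F) :=
  instTopologicalSpaceQuot

/-- The subgroup `Hⱼ ⊆ (ℤ₂)ᵐ` generated by `e₁, …, eⱼ` (as a subset: the elements supported
on the first `j` coordinates). -/
def Hset (m j : ℕ) : Set (Fin m → ZMod 2) := {g | ∀ i : Fin m, j ≤ (i : ℕ) → g i = 0}

/-- `Y⁽ʲ⁾ = η(P × Hⱼ) ⊆ ℝ𝒵_P`. -/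
def Yj {n m : ℕ} (P : Set (EuclideanSpace ℝ (Fin n)))
    (F : Fin m → Set (EuclideanSpace ℝ (Fin n))) (j : ℕ) : Set (RZ P F) :=
  {z | ∃ (p : ↥P) (g : Fin m → ZMod 2), g ∈ Hset m j ∧ z = Quot.mk (rzRel P F) (p, g)}

/-- `F⁽ʲ⁾_i = η(Fᵢ × Hⱼ) ⊆ ℝ𝒵_P`. -/
def Fji {n m : ℕ} (P : Set (EuclideanSpace ℝ (Fin n)))
    (F : Fin m → Set (EuclideanSpace ℝ (Fin n))) (j : ℕ) (i : Fin m) : Set (RZ P F) :=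
  {z | ∃ (p : ↥P) (g : Fin m → ZMod 2), g ∈ Hset m j ∧
        (p : EuclideanSpace ℝ (Fin n)) ∈ F i ∧ z = Quot.mk (rzRel P F) (p, g)}

/-- The double of `X` along `A ⊆ X`: two copies of `X` glued by the identity along `A`. -/
def DoubleRel {X : Type*} (A : Set X) (a b : X × Bool) : Prop :=
  a.1 = b.1 ∧ (a.2 = b.2 ∨ a.1 ∈ A)

instance : DiscreteTopology (ZMod 2) := ⟨rfl⟩
instance : ContinuousAdd (ZMod 2) := ⟨continuous_of_discreteTopology⟩

namespace Stmt10Aux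

lemma zmod2_cases (x : ZMod 2) : x = 0 ∨ x = 1 := by revert x; decide

variable {n m : ℕ} {P : Set (EuclideanSpace ℝ (Fin n))}
  {F : Fin m → Set (EuclideanSpace ℝ (Fin n))}

lemma mem_Gface_iff {p : EuclideanSpace ℝ (Fin n)} {g : Fin m → ZMod 2} :
    g ∈ Gface F p ↔ ∀ i, g i ≠ 0 → p ∈ F i := by
  constructor
  · intro hg
    refine AddSubgroup.closure_induction ?_ ?_ ?_ ?_ hg
    · rintro x ⟨i, hpi, rfl⟩ k hk
      have : k = i := by
        by_contra hne
        simp [eVec, Pi.single_apply, hne] at hk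
      rwa [this]
    · simp
    · intro x y _ _ hx hy k hk
      by_cases h1 : x k ≠ 0
      · exact hx k h1
      · refine hy k ?_
        intro h2
        simp only [not_not] at h1
        simp [Pi.add_apply, h1, h2] at hk
    · intro x _ hx k hk
      refine hx k ?_
      simpa [Pi.neg_apply, neg_ne_zero] using hk
  · intro h
    have hrep : g = ∑ i ∈ Finset.univ.filter (fun i => g i ≠ 0), eVec m i := by
      funext k
      rw [Finset.sum_apply]
      have : ∑ i ∈ Finset.univ.filter (fun i => g i ≠ 0), eVec m i k
          = if k ∈ Finset.univ.filter (fun i => g i ≠ 0) then (1 : ZMod 2) else 0 := by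
        simpa [eVec] using Finset.sum_pi_single k (fun _ => (1 : ZMod 2))
          (Finset.univ.filter (fun i => g i ≠ 0))
      rw [this]
      by_cases hk : g k = 0
      · simp [hk]
      · simp only [Finset.mem_filter, Finset.mem_univ, true_and, if_pos hk]
        rcases zmod2_cases (g k) with h0 | h1
        · exact absurd h0 hk
        · exact h1
    rw [hrep]
    refine AddSubgroup.sum_mem _ ?_
    intro i hi
    simp only [Finset.mem_filter, Finset.mem_univ, true_and] at hi
    exact AddSubgroup.subset_closure ⟨i, h i hi, rfl⟩

/-- truncation: zero out coordinates `≥ j`. -/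
def trunc (j : ℕ) (g : Fin m → ZMod 2) : Fin m → ZMod 2 :=
  fun i => if (i : ℕ) < j then g i else 0

lemma trunc_mem_Hset (j : ℕ) (g : Fin m → ZMod 2) : trunc j g ∈ Hset m j := by
  intro i hi
  simp [trunc, Nat.not_lt.2 hi]

/-- translation by a constant on `RZ`. -/
def Tmap (P : Set (EuclideanSpace ℝ (Fin n))) (F : Fin m → Set (EuclideanSpace ℝ (Fin n)))
    (c : Fin m → ZMod 2) : RZ P F → RZ P F :=
  Quot.lift (fun a => Quot.mk (rzRel P F) (a.1, a.2 + c))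
    (fun a b hab => Quot.sound ⟨hab.1, by
      simpa [add_sub_add_right_eq_sub] using hab.2⟩)

lemma continuous_Tmap (c : Fin m → ZMod 2) : Continuous (Tmap P F c) := by
  refine continuous_quot_lift _ ?_
  exact continuous_quot_mk.comp (continuous_fst.prodMk (continuous_snd.add continuous_const))

end Stmt10Aux

open Stmt10Aux in
/-- For `0 ≤ j ≤ m - 1`, the space `Y^{(j+1)}` is homeomorphic to the
double of `Y⁽ʲ⁾` along `F⁽ʲ⁾_{j+1}`. -/
theorem stmt10 (n m : ℕ)
    (P : Set (EuclideanSpace ℝ (Fin n)))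
    (F : Fin m → Set (EuclideanSpace ℝ (Fin n)))
    (j : ℕ) (hj : j < m) :
    Nonempty
      (Quot (DoubleRel {w : ↥(Yj P F j) | (w : RZ P F) ∈ Fji P F j ⟨j, hj⟩})
        ≃ₜ ↥(Yj P F (j + 1))) := by
  set jm : Fin m := ⟨j, hj⟩ with hjm
  set e : Fin m → ZMod 2 := eVec m jm with he
  set A : Set ↥(Yj P F j) := {w : ↥(Yj P F j) | (w : RZ P F) ∈ Fji P F j jm} with hA
  have ecoord : ∀ i : Fin m, (i : ℕ) ≠ j → e i = 0 := by
    intro i hi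
    have : i ≠ jm := by
      intro h; apply hi; rw [h]
    simp [he, eVec, Pi.single_apply, this]
  have e_self : e jm = 1 := by simp [he, eVec]
  -- T maps Yj j into Yj (j+1)
  have hT : ∀ z ∈ Yj P F j, Tmap P F e z ∈ Yj P F (j + 1) := by
    rintro z ⟨p, g, hg, rfl⟩
    refine ⟨p, g + e, ?_, rfl⟩
    intro i hi
    have h1 : g i = 0 := hg i (by omega)
    have h2 : e i = 0 := ecoord i (by omega)
    simp [Pi.add_apply, h1, h2]
  have hmono : Yj P F j ⊆ Yj P F (j + 1) := by
    rintro z ⟨p, g, hg, rfl⟩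
    exact ⟨p, g, fun i hi => hg i (by omega), rfl⟩
  -- forward map
  let fwd0 : (↥(Yj P F j) × Bool) → ↥(Yj P F (j + 1)) := fun w =>
    if w.2 = true then ⟨Tmap P F e ↑w.1, hT _ w.1.2⟩ else ⟨↑w.1, hmono w.1.2⟩
  have hfix : ∀ w : ↥(Yj P F j), w ∈ A → Tmap P F e (↑w : RZ P F) = ↑w := by
    rintro w ⟨p, g, hg, hp, hw⟩
    show Tmap P F e (w : RZ P F) = ↑w
    rw [hw]
    refine Quot.sound ⟨rfl, ?_⟩
    have : g + e - g = e := by abel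
    rw [this]
    exact AddSubgroup.subset_closure ⟨jm, hp, rfl⟩
  have fwd0_sound : ∀ a b, DoubleRel A a b → fwd0 a = fwd0 b := by
    rintro ⟨w, ε⟩ ⟨w', ε'⟩ ⟨h1, h2⟩
    dsimp only at h1
    subst h1
    rcases h2 with h2 | h2
    · dsimp only at h2; subst h2; rfl
    · apply Subtype.ext
      rcases ε <;> rcases ε' <;> simp [fwd0, hfix w h2]
  let fwd : Quot (DoubleRel A) → ↥(Yj P F (j + 1)) := Quot.lift fwd0 fwd0_sound
  -- backward map
  let bwd0 : (↥P × (Fin m → ZMod 2)) → Quot (DoubleRel A) := fun a =>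
    Quot.mk _ (⟨Quot.mk (rzRel P F) (a.1, trunc j a.2),
      ⟨a.1, trunc j a.2, trunc_mem_Hset j a.2, rfl⟩⟩, decide (a.2 jm = 1))
  have bwd0_sound : ∀ a b, rzRel P F a b → bwd0 a = bwd0 b := by
    rintro ⟨p, g⟩ ⟨p', g'⟩ ⟨h1, h2⟩
    dsimp only at h1 h2
    subst h1
    have htr : trunc j g - trunc j g' ∈ Gface F (p : EuclideanSpace ℝ (Fin n)) := by
      rw [mem_Gface_iff]
      intro i hi
      have hlt : (i : ℕ) < j := by
        by_contra hlt
        simp [Pi.sub_apply, trunc, hlt] at hi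
      refine (mem_Gface_iff.1 h2) i ?_
      simpa [Pi.sub_apply, trunc, hlt] using hi
    have hq : Quot.mk (rzRel P F) (p, trunc j g) = Quot.mk (rzRel P F) (p, trunc j g') :=
      Quot.sound ⟨rfl, htr⟩
    by_cases hε : g jm = g' jm
    · exact Quot.sound ⟨Subtype.ext hq, Or.inl (by dsimp only; simp only [hε])⟩
    · refine Quot.sound ⟨Subtype.ext hq, Or.inr ?_⟩
      have hFp : (p : EuclideanSpace ℝ (Fin n)) ∈ F jm := by
        refine (mem_Gface_iff.1 h2) jm ?_
        simpa [Pi.sub_apply, sub_eq_zero] using hε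
      exact ⟨p, trunc j g, trunc_mem_Hset j g, hFp, rfl⟩
  let bwdRZ : RZ P F → Quot (DoubleRel A) := Quot.lift bwd0 bwd0_sound
  let bwd : ↥(Yj P F (j + 1)) → Quot (DoubleRel A) := fun z => bwdRZ ↑z
  -- left inverse
  have hleft : ∀ q, bwd (fwd q) = q := by
    intro q
    induction q using Quot.ind
    rename_i a
    obtain ⟨w, ε⟩ := a
    obtain ⟨p, g, hg, hw⟩ := w.2
    have hgj : g jm = 0 := hg jm (le_refl j)
    have htg : trunc j g = g := by
      funext i
      by_cases hlt : (i : ℕ) < j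
      · simp [trunc, hlt]
      · simp [trunc, hlt, (hg i (Nat.not_lt.1 hlt)).symm]
    have hfb : ∀ ε : Bool, bwd (fwd (Quot.mk (DoubleRel A) (w, ε)))
        = bwdRZ ((fwd0 (w, ε) : ↥(Yj P F (j + 1))) : RZ P F) := fun _ => rfl
    rcases ε with _ | _
    · -- ε = false
      rw [hfb false]
      have c2 : ((fwd0 (w, false) : ↥(Yj P F (j + 1))) : RZ P F) = (↑w : RZ P F) := rfl
      rw [c2, hw]
      have c3 : bwdRZ (Quot.mk (rzRel P F) (p, g))
          = Quot.mk (DoubleRel A) (⟨Quot.mk (rzRel P F) (p, trunc j g),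
              ⟨p, trunc j g, trunc_mem_Hset j g, rfl⟩⟩, decide (g jm = 1)) := rfl
      have hdec : decide (g jm = 1) = false := by rw [hgj]; decide
      rw [c3, hdec]
      refine congrArg _ (Prod.ext (Subtype.ext ?_) rfl)
      show Quot.mk (rzRel P F) (p, trunc j g) = (w : RZ P F)
      rw [htg]; exact hw.symm
    · -- ε = true
      rw [hfb true]
      have c2 : ((fwd0 (w, true) : ↥(Yj P F (j + 1))) : RZ P F)
          = Tmap P F e (↑w : RZ P F) := rfl
      rw [c2, hw]
      have c3 : Tmap P F e (Quot.mk (rzRel P F) (p, g))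
          = Quot.mk (rzRel P F) (p, g + e) := rfl
      rw [c3]
      have c4 : bwdRZ (Quot.mk (rzRel P F) (p, g + e))
          = Quot.mk (DoubleRel A) (⟨Quot.mk (rzRel P F) (p, trunc j (g + e)),
              ⟨p, trunc j (g + e), trunc_mem_Hset j (g + e), rfl⟩⟩,
              decide ((g + e) jm = 1)) := rfl
      rw [c4]
      have h1 : trunc j (g + e) = g := by
        funext i
        by_cases hlt : (i : ℕ) < j
        · have : e i = 0 := ecoord i (by omega)
          simp [trunc, hlt, this]
        · simp [trunc, hlt, (hg i (Nat.not_lt.1 hlt)).symm]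
      have h2 : (g + e) jm = 1 := by simp [Pi.add_apply, hgj, e_self]
      have hdec : decide ((g + e) jm = 1) = true := by rw [h2]; decide
      rw [hdec]
      refine congrArg _ (Prod.ext (Subtype.ext ?_) rfl)
      show Quot.mk (rzRel P F) (p, trunc j (g + e)) = (w : RZ P F)
      rw [h1]; exact hw.symm
  -- right inverse
  have hright : ∀ z, fwd (bwd z) = z := by
    rintro z
    obtain ⟨p, g, hg, hz⟩ := z.2
    apply Subtype.ext
    show ((fwd (bwdRZ ↑z) : ↥(Yj P F (j + 1))) : RZ P F) = ↑z
    rw [hz]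
    have c3 : bwdRZ (Quot.mk (rzRel P F) (p, g))
        = Quot.mk (DoubleRel A) (⟨Quot.mk (rzRel P F) (p, trunc j g),
            ⟨p, trunc j g, trunc_mem_Hset j g, rfl⟩⟩, decide (g jm = 1)) := rfl
    rw [c3]
    rcases zmod2_cases (g jm) with h0 | h1
    · have hdec : decide (g jm = 1) = false := by rw [h0]; decide
      rw [hdec]
      have htg : trunc j g = g := by
        funext i
        by_cases hlt : (i : ℕ) < j
        · simp [trunc, hlt]
        · rcases Nat.lt_or_ge (i : ℕ) (j + 1) with hle | hge
          · have hijm : i = jm := by apply Fin.ext; simp [hjm]; omega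
            rw [hijm]; simp [trunc, hjm, h0]; exact h0.symm
          · simp [trunc, hlt, (hg i hge).symm]
      have c5 : fwd (Quot.mk (DoubleRel A) (⟨Quot.mk (rzRel P F) (p, trunc j g),
            ⟨p, trunc j g, trunc_mem_Hset j g, rfl⟩⟩, false))
          = ⟨Quot.mk (rzRel P F) (p, trunc j g),
              hmono ⟨p, trunc j g, trunc_mem_Hset j g, rfl⟩⟩ := rfl
      rw [c5]
      show Quot.mk (rzRel P F) (p, trunc j g) = Quot.mk (rzRel P F) (p, g)
      rw [htg]
    · have hdec : decide (g jm = 1) = true := by rw [h1]; decide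
      rw [hdec]
      have c5 : fwd (Quot.mk (DoubleRel A) (⟨Quot.mk (rzRel P F) (p, trunc j g),
            ⟨p, trunc j g, trunc_mem_Hset j g, rfl⟩⟩, true))
          = ⟨Tmap P F e (Quot.mk (rzRel P F) (p, trunc j g)),
              hT _ ⟨p, trunc j g, trunc_mem_Hset j g, rfl⟩⟩ := rfl
      rw [c5]
      show Tmap P F e (Quot.mk (rzRel P F) (p, trunc j g)) = Quot.mk (rzRel P F) (p, g)
      have c6 : Tmap P F e (Quot.mk (rzRel P F) (p, trunc j g))
          = Quot.mk (rzRel P F) (p, trunc j g + e) := rfl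
      rw [c6]
      have : trunc j g + e = g := by
        funext i
        by_cases hlt : (i : ℕ) < j
        · have : e i = 0 := ecoord i (by omega)
          simp [trunc, hlt, this]
        · rcases Nat.lt_or_ge (i : ℕ) (j + 1) with hle | hge
          · have hijm : i = jm := by apply Fin.ext; simp [hjm]; omega
            rw [hijm]
            simp [trunc, hjm, e_self, h1]
            exact e_self.trans h1.symm
          · have h2 : e i = 0 := ecoord i (by omega)
            simp [trunc, hlt, h2, (hg i hge).symm]
      rw [this]
  -- continuity of fwd
  have hcont_fwd : Continuous fwd := by
    refine continuous_quot_lift _ ?_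
    refine continuous_induced_rng.2 ?_
    have heq : (Subtype.val ∘ fwd0 : ↥(Yj P F j) × Bool → RZ P F)
        = fun w => if w.2 = true then Tmap P F e ↑w.1 else ↑w.1 := by
      funext w
      by_cases h : w.2 = true <;> simp [fwd0, h]
    rw [heq]
    refine Continuous.if ?_ ?_ ?_
    · intro a ha
      have hcl : IsClopen {x : ↥(Yj P F j) × Bool | x.2 = true} := by
        have : {x : ↥(Yj P F j) × Bool | x.2 = true} = Prod.snd ⁻¹' {true} := rfl
        rw [this]
        exact (isClopen_discrete _).preimage continuous_snd
      rw [hcl.frontier_eq] at ha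
      exact absurd ha (Set.notMem_empty a)
    · exact (continuous_Tmap e).comp (continuous_subtype_val.comp continuous_fst)
    · exact continuous_subtype_val.comp continuous_fst
  -- continuity of bwd
  have hcont_bwd : Continuous bwd := by
    refine Continuous.comp ?_ continuous_subtype_val
    refine continuous_quot_lift _ ?_
    refine continuous_quot_mk.comp (Continuous.prodMk ?_ ?_)
    · refine Continuous.subtype_mk ?_ _
      refine continuous_quot_mk.comp (continuous_fst.prodMk ?_)
      exact (continuous_of_discreteTopology (α := Fin m → ZMod 2)
        (f := trunc j)).comp continuous_snd
    · exact (continuous_of_discreteTopology (α := Fin m → ZMod 2)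
        (f := fun g => decide (g jm = 1))).comp continuous_snd
  exact ⟨⟨⟨fwd, bwd, hleft, hright⟩, hcont_fwd, hcont_bwd⟩⟩
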